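/- There exists an H-colored multigraph G such that L_2^H(G) is Hamiltonian but G has no closed Euler dynamic H-trail. -/

import Mathlib

namespace DynH

/-- A multigraph without loops: each edge `e` has two distinct endpoints
`G.fst e` and `G.snd e`. Parallel edges are allowed since `E` is an abstract
edge type. -/
structure Multigraph (V E : Type) where
  fst : E → V
  snd : E → V
  loopless : ∀ e, fst e ≠ snd e

variable {V E C : Type}

namespace Multigraph

/-- The vertex `x` is incident with the edge `e`. -/
def inc (G : Multigraph V E) (x : V) (e : E) : Prop := G.fst e = x ∨ G.snd e = x

/-- The edge `e` joins the vertices `x` and `y`. -/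
def joins (G : Multigraph V E) (e : E) (x y : V) : Prop :=
  (G.fst e = x ∧ G.snd e = y) ∨ (G.fst e = y ∧ G.snd e = x)

/-- `e` and `g` have the same pair of end vertices. -/
def parallel (G : Multigraph V E) (e g : E) : Prop :=
  (G.fst e = G.fst g ∧ G.snd e = G.snd g) ∨ (G.fst e = G.snd g ∧ G.snd e = G.fst g)

end Multigraph

instance Multigraph.decInc (G : Multigraph V E) [DecidableEq V] :
    ∀ (x : V) (e : E), Decidable (G.inc x e) := fun x e => by
  unfold Multigraph.inc; infer_instance

/-- The underlying simple graph of a multigraph (used to express connectedness). -/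
def SupportGraph (G : Multigraph V E) : SimpleGraph V where
  Adj x y := x ≠ y ∧ ∃ e, G.joins e x y
  symm := by
    constructor
    rintro x y ⟨hxy, e, he⟩
    exact ⟨hxy.symm, e, he.symm⟩
  loopless := ⟨fun x h => h.1 rfl⟩

/-- Vertices of `L_2^H(G)`: the incidences `f(x,e)`. -/
def L2V (G : Multigraph V E) : Type := {p : V × E // G.inc p.1 p.2}

instance (G : Multigraph V E) [DecidableEq V] [DecidableEq E] : DecidableEq (L2V G) := by
  unfold L2V; infer_instance

instance (G : Multigraph V E) [Fintype V] [Fintype E] [DecidableEq V] : Fintype (L2V G) := by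
  unfold L2V; infer_instance

/-- Adjacency of `L_2^H(G)` (one-sided; it is symmetrized below, which changes
nothing when `adjH` is symmetric). -/
def L2Adj (G : Multigraph V E) (adjH : C → C → Prop) (c : E → C) (p q : L2V G) : Prop :=
  (p.val.2 = q.val.2 ∧ p.val.1 ≠ q.val.1)
  ∨ (p.val.1 = q.val.1 ∧ p.val.2 ≠ q.val.2 ∧ adjH (c p.val.2) (c q.val.2))
  ∨ (p.val.1 ≠ q.val.1 ∧ p.val.2 ≠ q.val.2 ∧ G.parallel p.val.2 q.val.2)

/-- The auxiliary simple graph `L_2^H(G)`. -/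
def L2Graph (G : Multigraph V E) (adjH : C → C → Prop) (c : E → C) :
    SimpleGraph (L2V G) where
  Adj p q := L2Adj G adjH c p q ∨ L2Adj G adjH c q p
  symm := ⟨fun _ _ h => Or.symm h⟩
  loopless := ⟨fun p h => by
    rcases h with h | h <;> rcases h with ⟨_, h⟩ | ⟨_, h, _⟩ | ⟨h, _⟩ <;> exact h rfl⟩

/-- The joint matching `M_J = { f(x,e)f(y,e) : e = xy ∈ E(G) }` of `L_2^H(G)`. -/
def MJ (G : Multigraph V E) : Set (Sym2 (L2V G)) :=
  {s | ∃ p q : L2V G, s = s(p, q) ∧ p ≠ q ∧ p.val.2 = q.val.2}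

/-- A matching of a simple graph, given as a set of edges. -/
def IsMatchingSet {α : Type} (Gr : SimpleGraph α) (M : Set (Sym2 α)) : Prop :=
  M ⊆ Gr.edgeSet ∧ ∀ v : α, ∀ s ∈ M, ∀ t ∈ M, v ∈ s → v ∈ t → s = t

/-- A perfect matching of a simple graph, given as a set of edges. -/
def IsPerfectMatchingSet {α : Type} (Gr : SimpleGraph α) (M : Set (Sym2 α)) : Prop :=
  IsMatchingSet Gr M ∧ ∀ v : α, ∃ s ∈ M, v ∈ s

/-- Every entry `(x, y, e)` of the list records a traversal of an edge `e`
joining `x` and `y` (from `x` to `y`). -/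
def GoodEntries (G : Multigraph V E) (L : List (V × V × E)) : Prop :=
  ∀ t ∈ L, G.joins t.2.2 t.1 t.2.1

/-- The list of edges underlying a list of edge traversals. -/
def edgesOf (L : List (V × V × E)) : List E := L.map fun t => t.2.2

/-- Allowed consecutive pair in a dynamic `H`-trail: either a transition through a
common vertex with colors adjacent in `H`, or a lane change between parallel edges. -/
def DynStep (G : Multigraph V E) (adjH : C → C → Prop) (c : E → C)
    (a b : V × V × E) : Prop :=
  (a.2.1 = b.1 ∧ adjH (c a.2.2) (c b.2.2))
  ∨ (a.1 = b.1 ∧ a.2.1 = b.2.1 ∧ a.2.2 ≠ b.2.2 ∧ G.parallel a.2.2 b.2.2)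

/-- Allowed consecutive pair in an `H`-trail: transition through a common vertex
with colors adjacent in `H`. -/
def HStep (adjH : C → C → Prop) (c : E → C) (a b : V × V × E) : Prop :=
  a.2.1 = b.1 ∧ adjH (c a.2.2) (c b.2.2)

/-- A closed dynamic `H`-trail, encoded as the cyclic list of its edge traversals. -/
def IsClosedDynHTrail (G : Multigraph V E) (adjH : C → C → Prop) (c : E → C)
    (L : List (V × V × E)) : Prop :=
  L ≠ [] ∧ (edgesOf L).Nodup ∧ GoodEntries G L ∧
    ∀ p ∈ L.zip (L.rotate 1), DynStep G adjH c p.1 p.2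

/-- A closed `H`-trail, encoded as the cyclic list of its edge traversals. -/
def IsClosedHTrail (G : Multigraph V E) (adjH : C → C → Prop) (c : E → C)
    (L : List (V × V × E)) : Prop :=
  L ≠ [] ∧ (edgesOf L).Nodup ∧ GoodEntries G L ∧
    ∀ p ∈ L.zip (L.rotate 1), HStep adjH c p.1 p.2

/-- A (non-closed) dynamic `H`-trail. -/
def IsDynHTrail (G : Multigraph V E) (adjH : C → C → Prop) (c : E → C)
    (L : List (V × V × E)) : Prop :=
  L ≠ [] ∧ (edgesOf L).Nodup ∧ GoodEntries G L ∧
    ∀ p ∈ L.zip L.tail, DynStep G adjH c p.1 p.2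

/-- A (non-closed) `H`-trail. -/
def IsHTrail (G : Multigraph V E) (adjH : C → C → Prop) (c : E → C)
    (L : List (V × V × E)) : Prop :=
  L ≠ [] ∧ (edgesOf L).Nodup ∧ GoodEntries G L ∧
    ∀ p ∈ L.zip L.tail, HStep adjH c p.1 p.2

/-- A cycle in `L_2^H(G)` (as a cyclic list of distinct vertices) which alternates
between edges of the joint matching `M_J` (at even positions) and edges of
`E(L_2^H(G)) \ M_J` (at odd positions). -/
def IsAltCycle (G : Multigraph V E) (adjH : C → C → Prop) (c : E → C)
    (vs : List (L2V G)) : Prop :=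
  vs ≠ [] ∧ vs.Nodup ∧ 3 ≤ vs.length ∧
    ∀ k : Fin vs.length,
      (L2Graph G adjH c).Adj (vs.get k)
        (vs.get ⟨(k.val + 1) % vs.length, Nat.mod_lt _ (Nat.lt_of_le_of_lt (Nat.zero_le _) k.isLt)⟩) ∧
      (s(vs.get k,
          vs.get ⟨(k.val + 1) % vs.length,
            Nat.mod_lt _ (Nat.lt_of_le_of_lt (Nat.zero_le _) k.isLt)⟩) ∈ MJ G ↔ k.val % 2 = 0)

/-- The simple graph `G_x` on the edges of `G` incident with `x`; two such edges are
adjacent iff their colors are adjacent in `H`. (Symmetrized; this changes nothing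
when `adjH` is symmetric.) -/
def GxGraph (G : Multigraph V E) (adjH : C → C → Prop) (c : E → C) (x : V) :
    SimpleGraph {e : E // G.inc x e} where
  Adj a b := a ≠ b ∧ (adjH (c a.val) (c b.val) ∨ adjH (c b.val) (c a.val))
  symm := by constructor; rintro a b ⟨hab, h⟩; exact ⟨hab.symm, h.symm⟩
  loopless := ⟨fun a h => h.1 rfl⟩

end DynH


namespace DynH

instance decParallel {V E : Type} [DecidableEq V] (G : Multigraph V E) (e g : E) :
    Decidable (G.parallel e g) := by
  unfold Multigraph.parallel; infer_instance

instance decJoins {V E : Type} [DecidableEq V] (G : Multigraph V E) (e : E) (x y : V) :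
    Decidable (G.joins e x y) := by
  unfold Multigraph.joins; infer_instance

instance decL2Adj {V E C : Type} [DecidableEq V] [DecidableEq E] (G : Multigraph V E)
    (adjH : C → C → Prop) [DecidableRel adjH] (c : E → C) (p q : L2V G) :
    Decidable (L2Adj G adjH c p q) := by
  unfold L2Adj; infer_instance

instance decL2GraphAdj {V E C : Type} [DecidableEq V] [DecidableEq E] (G : Multigraph V E)
    (adjH : C → C → Prop) [DecidableRel adjH] (c : E → C) :
    DecidableRel (L2Graph G adjH c).Adj := fun p q => by
  change Decidable (L2Adj G adjH c p q ∨ L2Adj G adjH c q p); infer_instance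

instance decDynStep {V E C : Type} [DecidableEq V] [DecidableEq E] (G : Multigraph V E)
    (adjH : C → C → Prop) [DecidableRel adjH] (c : E → C) (a b : V × V × E) :
    Decidable (DynStep G adjH c a b) := by
  unfold DynStep; infer_instance

/-- The example multigraph: vertices `u = 0`, `v = 1`, `a = 2`; edges
`0 = uv` (red), `1 = uv` (blue), `2 = ua` (red), `3 = va` (red). -/
def Gex : Multigraph (Fin 3) (Fin 4) where
  fst := ![0, 0, 0, 1]
  snd := ![1, 1, 2, 2]
  loopless := by decide

/-- The coloring: edge `1` is blue, all others red. -/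
def cex : Fin 4 → Bool := ![false, true, false, false]

/-- Short-hand for vertices of `L_2^H(Gex)`. -/
def vx (x : Fin 3) (e : Fin 4) (h : Gex.inc x e := by decide) : L2V Gex := ⟨(x, e), h⟩

/-- A Hamiltonian cycle in `L_2^H(Gex)`. -/
def Wex : (L2Graph Gex (Eq (α := Bool)) cex).Walk (vx 1 0) (vx 1 0) :=
  .cons (v := vx 0 1) (by decide) <| .cons (v := vx 1 1) (by decide) <|
  .cons (v := vx 0 0) (by decide) <| .cons (v := vx 0 2) (by decide) <|
  .cons (v := vx 2 2) (by decide) <| .cons (v := vx 2 3) (by decide) <|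
  .cons (v := vx 1 3) (by decide) <| .cons (v := vx 1 0) (by decide) .nil

lemma Wex_spec : Wex.IsHamiltonianCycle where
  isCircuit :=
    { isTrail := ⟨by decide⟩
      ne_nil := by simp [Wex] }
  support_nodup := by decide
  isHamiltonian_tail := by unfold SimpleGraph.Walk.IsHamiltonian; decide

lemma keyNext : ∀ a b : Fin 3 × Fin 3 × Fin 4,
    DynStep Gex (Eq (α := Bool)) cex a b → a.2.2 = 1 → b.2.2 = 0 ∨ b.2.2 = 1 := by decide

lemma keyPrev : ∀ a b : Fin 3 × Fin 3 × Fin 4,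
    DynStep Gex (Eq (α := Bool)) cex a b → b.2.2 = 1 → a.2.2 = 0 ∨ a.2.2 = 1 := by decide

end DynH

namespace DynH

/-- There exists an `H`-colored multigraph `G` such that `L_2^H(G)` is Hamiltonian
but `G` has no closed Euler dynamic `H`-trail. -/
theorem exists_L2_hamiltonian_without_euler_dynHTrail :
    ∃ (V E C : Type) (_ : Fintype V) (_ : Fintype E) (_ : DecidableEq V)
      (_ : DecidableEq E) (G : Multigraph V E) (adjH : C → C → Prop)
      (_ : Symmetric adjH) (c : E → C),
      (L2Graph G adjH c).IsHamiltonian ∧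
        ¬ ∃ L : List (V × V × E),
            IsClosedDynHTrail G adjH c L ∧ ∀ e : E, e ∈ edgesOf L := by
  refine ⟨Fin 3, Fin 4, Bool, inferInstance, inferInstance, inferInstance, inferInstance,
    Gex, Eq, fun _ _ h => h.symm, cex, ?_, ?_⟩
  · intro _
    exact ⟨vx 1 0, Wex, Wex_spec⟩
  · rintro ⟨L, ⟨-, hnodup, -, hstep⟩, hall⟩
    -- the list has length 4
    have hlen : L.length = 4 := by
      have h1 : (edgesOf L).toFinset = Finset.univ :=
        Finset.eq_univ_iff_forall.2 fun e => List.mem_toFinset.2 (hall e)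
      have h2 : (edgesOf L).toFinset.card = 4 := by rw [h1]; decide
      have h3 : (edgesOf L).length = 4 := by
        rw [← List.toFinset_card_of_nodup hnodup]; exact h2
      simpa [edgesOf] using h3
    obtain ⟨t0, t1, t2, t3, rfl⟩ : ∃ t0 t1 t2 t3, L = [t0, t1, t2, t3] := by
      match L, hlen with
      | [t0, t1, t2, t3], _ => exact ⟨t0, t1, t2, t3, rfl⟩
    have hrot : ([t0, t1, t2, t3].rotate 1) = [t1, t2, t3, t0] := by
      simp [List.rotate]
    rw [hrot] at hstep
    have s01 : DynStep Gex (Eq (α := Bool)) cex t0 t1 := hstep (t0, t1) (by simp)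
    have s12 : DynStep Gex (Eq (α := Bool)) cex t1 t2 := hstep (t1, t2) (by simp)
    have s23 : DynStep Gex (Eq (α := Bool)) cex t2 t3 := hstep (t2, t3) (by simp)
    have s30 : DynStep Gex (Eq (α := Bool)) cex t3 t0 := hstep (t3, t0) (by simp)
    simp only [edgesOf, List.map_cons, List.map_nil, List.nodup_cons, List.mem_cons,
      List.mem_singleton, List.not_mem_nil, or_false, not_or] at hnodup
    obtain ⟨⟨h01, h02, h03⟩, ⟨h12, h13⟩, h23, -⟩ := hnodup
    have hmem : (1 : Fin 4) ∈ edgesOf [t0, t1, t2, t3] := hall 1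
    simp only [edgesOf, List.map_cons, List.map_nil, List.mem_cons, List.mem_singleton,
      List.not_mem_nil, or_false] at hmem
    rcases hmem with h | h | h | h
    · have hn := keyNext t0 t1 s01 h.symm
      have hp := keyPrev t3 t0 s30 h.symm
      rcases hn with hn | hn <;> rcases hp with hp | hp <;> simp_all
    · have hn := keyNext t1 t2 s12 h.symm
      have hp := keyPrev t0 t1 s01 h.symm
      rcases hn with hn | hn <;> rcases hp with hp | hp <;> simp_all
    · have hn := keyNext t2 t3 s23 h.symm
      have hp := keyPrev t1 t2 s12 h.symm
      rcases hn with hn | hn <;> rcases hp with hp | hp <;> simp_all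
    · have hn := keyNext t3 t0 s30 h.symm
      have hp := keyPrev t2 t3 s23 h.symm
      rcases hn with hn | hn <;> rcases hp with hp | hp <;> simp_all

end DynH
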